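/- arXiv:1406.0794 — 2 statements merged into one kernel-verified Lean document; each statement's English description precedes it below -/
import Mathlib

section
/- Let α : ℝ² → ℝ be convex and superlinear with e > min α, and assume that at each boundary point c of A(e) = {α ≤ e} the set of outer normal directions is a single ray ρ(c). Then the map c ↦ ρ(c) from the boundary α⁻¹(e) to the space of rays in ℝ² is continuous and surjective. -/
open Filter Topology

/-- if at each point c of the boundary α⁻¹(e) of the sublevel set {α ≤ e}
the outer normals form a single ray, directed by the unit vector ρ(c), then
c ↦ ρ(c) is continuous on α⁻¹(e) and onto the set of rays (unit vectors). -/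
theorem outer_normal_ray_map_continuous_surjective
    (α : EuclideanSpace ℝ (Fin 2) → ℝ) (hconv : ConvexOn ℝ Set.univ α)
    (hcont : Continuous α)
    (hsuper : Tendsto (fun c : EuclideanSpace ℝ (Fin 2) => α c / ‖c‖) (cocompact _) atTop)
    (e : ℝ) (hmin : ∃ cm : EuclideanSpace ℝ (Fin 2), α cm < e)
    (ρ : EuclideanSpace ℝ (Fin 2) → EuclideanSpace ℝ (Fin 2))
    (hρunit : ∀ c ∈ α ⁻¹' {e}, ‖ρ c‖ = 1)
    (hρnormal : ∀ c ∈ α ⁻¹' {e}, ∀ c' : EuclideanSpace ℝ (Fin 2), α c' ≤ e →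
      (inner ℝ (c' - c) (ρ c) : ℝ) ≤ 0)
    (hρunique : ∀ c ∈ α ⁻¹' {e}, ∀ v : EuclideanSpace ℝ (Fin 2), v ≠ 0 →
      (∀ c' : EuclideanSpace ℝ (Fin 2), α c' ≤ e → (inner ℝ (c' - c) v : ℝ) ≤ 0) →
      ∃ t : ℝ, 0 < t ∧ v = t • ρ c) :
    ContinuousOn ρ (α ⁻¹' {e}) ∧
    ∀ v : EuclideanSpace ℝ (Fin 2), ‖v‖ = 1 → ∃ c ∈ α ⁻¹' {e}, ρ c = v := by
  classical
  set S : Set (EuclideanSpace ℝ (Fin 2)) := α ⁻¹' {e} with hS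
  -- key uniqueness: any unit outer normal at c ∈ S equals ρ c
  have key : ∀ c ∈ S, ∀ v : EuclideanSpace ℝ (Fin 2), ‖v‖ = 1 →
      (∀ c' : EuclideanSpace ℝ (Fin 2), α c' ≤ e → (inner ℝ (c' - c) v : ℝ) ≤ 0) →
      v = ρ c := by
    intro c hc v hv hnorm
    obtain ⟨t, ht, htv⟩ := hρunique c hc v (by simp [← norm_pos_iff, hv]) hnorm
    have h1 : (1 : ℝ) = t := by
      have := congrArg norm htv
      rwa [hv, norm_smul, Real.norm_eq_abs, abs_of_pos ht, hρunit c hc, mul_one] at this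
    rw [htv, ← h1, one_smul]
  constructor
  · -- continuity
    intro c hc
    refine tendsto_of_subseq_tendsto fun ns hns => ?_
    have hmemev : ∀ᶠ n in atTop, ns n ∈ S := hns.eventually self_mem_nhdsWithin
    have hnsc : Tendsto ns atTop (𝓝 c) := hns.mono_right nhdsWithin_le_nhds
    -- replace bad terms by c to get a sequence inside S
    set y : ℕ → EuclideanSpace ℝ (Fin 2) := fun n => if ns n ∈ S then ns n else c with hy
    have hyS : ∀ n, y n ∈ S := by
      intro n; by_cases h : ns n ∈ S <;> simp [hy, h, hc]
    have hyc : Tendsto y atTop (𝓝 c) := by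
      refine hnsc.congr' ?_
      filter_upwards [hmemev] with n h
      simp [hy, h]
    -- values are in the unit sphere, compact
    have hsph : ∀ n, ρ (y n) ∈ Metric.sphere (0 : EuclideanSpace ℝ (Fin 2)) 1 := by
      intro n; simp [hρunit _ (hyS n)]
    obtain ⟨v, hvmem, φ, hφ, hφv⟩ :=
      (isCompact_sphere (0 : EuclideanSpace ℝ (Fin 2)) 1).tendsto_subseq hsph
    have hvnorm : ‖v‖ = 1 := by simpa using hvmem
    -- v is an outer normal at c
    have hvnormal : ∀ c' : EuclideanSpace ℝ (Fin 2), α c' ≤ e →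
        (inner ℝ (c' - c) v : ℝ) ≤ 0 := by
      intro c' hc'
      have hycφ : Tendsto (fun k => y (φ k)) atTop (𝓝 c) := hyc.comp hφ.tendsto_atTop
      have hinner : Tendsto (fun k => (inner ℝ (c' - y (φ k)) (ρ (y (φ k))) : ℝ)) atTop
          (𝓝 (inner ℝ (c' - c) v : ℝ)) :=
        (Tendsto.sub tendsto_const_nhds hycφ).inner hφv
      exact le_of_tendsto hinner (Eventually.of_forall fun k =>
        hρnormal _ (hyS (φ k)) c' hc')
    have hveq : v = ρ c := key c hc v hvnorm hvnormal
    refine ⟨φ, ?_⟩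
    have : Tendsto (fun k => ρ (y (φ k))) atTop (𝓝 (ρ c)) := hveq ▸ hφv
    refine this.congr' ?_
    have : ∀ᶠ k in atTop, ns (φ k) ∈ S := hφ.tendsto_atTop.eventually hmemev
    filter_upwards [this] with k h
    simp [hy, h]
  · -- surjectivity
    intro v hv
    -- the sublevel set A is compact and nonempty
    set A : Set (EuclideanSpace ℝ (Fin 2)) := α ⁻¹' Set.Iic e with hA
    obtain ⟨cm, hcm⟩ := hmin
    have hAne : A.Nonempty := ⟨cm, le_of_lt hcm⟩
    have hAclosed : IsClosed A := isClosed_Iic.preimage hcont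
    have hAcomp : IsCompact A := by
      have hev : ∀ᶠ c in cocompact (EuclideanSpace ℝ (Fin 2)), |e| + 1 ≤ α c / ‖c‖ :=
        hsuper.eventually (eventually_ge_atTop (|e| + 1))
      obtain ⟨K, hK, hKsub⟩ := mem_cocompact.mp hev
      have hsub : A ⊆ K ∪ Metric.closedBall 0 |e| := by
        intro c hcA
        by_cases hcK : c ∈ K
        · exact Or.inl hcK
        · right
          have hle : |e| + 1 ≤ α c / ‖c‖ := hKsub hcK
          by_cases hc0 : c = 0
          · simp [hc0, abs_nonneg]
          · have hnc : (0 : ℝ) < ‖c‖ := norm_pos_iff.2 hc0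
            have : (|e| + 1) * ‖c‖ ≤ α c := by
              rw [← le_div_iff₀ hnc] at *; exact hle
            have h2 : (|e| + 1) * ‖c‖ ≤ |e| :=
              le_trans this (le_trans hcA (le_abs_self e))
            have h3 : ‖c‖ ≤ |e| := by nlinarith [abs_nonneg e]
            simpa [Metric.mem_closedBall] using h3
      exact (hK.union (isCompact_closedBall 0 |e|)).of_isClosed_subset hAclosed hsub
    -- maximize ⟨·, v⟩ over A
    obtain ⟨c, hcA, hmax⟩ := hAcomp.exists_isMaxOn hAne
      ((continuous_id.inner continuous_const).continuousOn :
        ContinuousOn (fun x : EuclideanSpace ℝ (Fin 2) => (inner ℝ x v : ℝ)) A)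
    have hcAe : α c ≤ e := hcA
    -- c is a boundary point: α c = e
    have hce : α c = e := by
      by_contra h
      have hlt : α c < e := lt_of_le_of_ne hcAe h
      have hcont2 : Tendsto (fun δ : ℝ => α (c + δ • v)) (𝓝 0) (𝓝 (α c)) := by
        have hc2 : Continuous (fun δ : ℝ => c + δ • v) := continuous_const.add (continuous_id.smul continuous_const)
        simpa [Function.comp_def] using (hcont.comp hc2).tendsto 0
      have hev : ∀ᶠ δ : ℝ in 𝓝[>] (0:ℝ), α (c + δ • v) < e :=
        (hcont2.mono_left nhdsWithin_le_nhds).eventually (eventually_lt_nhds hlt)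
      obtain ⟨δ, hδlt, hδpos⟩ := (hev.and self_mem_nhdsWithin).exists
      have hmem : c + δ • v ∈ A := le_of_lt hδlt
      have := hmax hmem
      simp only [Set.mem_setOf_eq, id_eq] at this
      have hcomp : (inner ℝ (c + δ • v) v : ℝ) = (inner ℝ c v : ℝ) + δ := by
        rw [inner_add_left, real_inner_smul_left, real_inner_self_eq_norm_sq, hv]
        ring
      rw [hcomp] at this
      linarith [hδpos]
    have hcS : c ∈ S := hce
    have hnormals : ∀ c' : EuclideanSpace ℝ (Fin 2), α c' ≤ e →
        (inner ℝ (c' - c) v : ℝ) ≤ 0 := by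
      intro c' hc'
      have := hmax (show c' ∈ A from hc')
      simp only [Set.mem_setOf_eq, id_eq] at this
      rw [inner_sub_left]
      linarith
    exact ⟨c, hcS, (key c hcS v hv hnormals).symm⟩
end

section
/- Let Σ ≅ ℝ/ℤ, ψ a homeomorphism of a compact subset of Σ, τ, m₀, ε₀ as in the paper, and for each m ≥ m₀ let x_m be a point whose ψ^τ-orbit O_m = {x_m, ψ^τ x_m, …, ψ^{(m-1)τ} x_m} has minimal period m and is (m, 2ε₀)-separated for ψ^τ as in Lemma 'orbit'. Assume additionally the separation conditions (7) of the paper between different orbits. Then the union ⋃_{k=m}^{2m-1} O_k is (4m, ε₀)-separated for ψ^τ, and has cardinality ≥ m²; in abstract form: if for every pair of points x ∈ O_k, y ∈ O_l with m ≤ k < l < 2m there exists 0 ≤ j < 4m with d(ψ^{jτ} x, ψ^{jτ} y) ≥ ε₀, and each O_k has cardinality k ≥ m with the O_k pairwise disjoint, then S_{4mτ}^{ψ}(ε₀) ≥ m², and hence limsup_n log S_n^ψ(ε₀)/log n ≥ 2. -/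
open Filter Topology

/-- The dynamical metric d_n^f(x,y) = max_{0 ≤ k ≤ n-1} d(f^k x, f^k y). -/
noncomputable def dynDist {X : Type*} [MetricSpace X] (f : X → X) (n : ℕ) (x y : X) : ℝ :=
  (((Finset.range n).sup fun k => nndist (f^[k] x) (f^[k] y) : NNReal) : ℝ)

/-- G_n^f(ε): minimal number of d_n^f-balls of radius ε covering X. -/
noncomputable def coverNum {X : Type*} [MetricSpace X] (f : X → X) (n : ℕ) (ε : ℝ) : ℕ :=
  sInf {N | ∃ s : Finset X, s.card = N ∧ ∀ x : X, ∃ c ∈ s, dynDist f n x c < ε}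

/-- E is (n,ε)-separated for f. -/
def IsDynSep {X : Type*} [MetricSpace X] (f : X → X) (n : ℕ) (ε : ℝ) (E : Set X) : Prop :=
  ∀ x ∈ E, ∀ y ∈ E, x ≠ y → ε ≤ dynDist f n x y

/-- S_n^f(ε): maximal cardinality of an (n,ε)-separated set. -/
noncomputable def sepNum {X : Type*} [MetricSpace X] (f : X → X) (n : ℕ) (ε : ℝ) : ℕ :=
  sSup {N | ∃ E : Finset X, E.card = N ∧ IsDynSep f n ε ↑E}

/-- Polynomial entropy via covering numbers. -/
noncomputable def hpol {X : Type*} [MetricSpace X] (f : X → X) : EReal :=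
  limsup (fun ε : ℝ =>
      limsup (fun n : ℕ => ((Real.log (coverNum f n ε) / Real.log n : ℝ) : EReal)) atTop)
    (𝓝[>] (0 : ℝ))

/-- Polynomial entropy via separated sets. -/
noncomputable def hpolSep {X : Type*} [MetricSpace X] (f : X → X) : EReal :=
  limsup (fun ε : ℝ =>
      limsup (fun n : ℕ => ((Real.log (sepNum f n ε) / Real.log n : ℝ) : EReal)) atTop)
    (𝓝[>] (0 : ℝ))

section MyAux
variable {X : Type*} [MetricSpace X] {f : X → X} {n : ℕ}

lemma my_dynDist_self (x : X) : dynDist f n x x = 0 := by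
  have h : ((Finset.range n).sup fun k => nndist (f^[k] x) (f^[k] x)) = 0 :=
    le_antisymm (Finset.sup_le fun k _ => by simp) (zero_le)
  simp [dynDist, h]

lemma my_dynDist_comm (x y : X) : dynDist f n x y = dynDist f n y x := by
  simp [dynDist, nndist_comm]

lemma my_dynDist_triangle (x y z : X) :
    dynDist f n x z ≤ dynDist f n x y + dynDist f n y z := by
  rw [dynDist, dynDist, dynDist, ← NNReal.coe_add, NNReal.coe_le_coe]
  refine Finset.sup_le fun k hk => ?_
  exact le_trans (nndist_triangle _ (f^[k] y) _)
    (add_le_add (Finset.le_sup (f := fun k => nndist (f^[k] x) (f^[k] y)) hk)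
      (Finset.le_sup (f := fun k => nndist (f^[k] y) (f^[k] z)) hk))

lemma my_dist_le_dynDist {j : ℕ} (hj : j < n) (x y : X) :
    dist (f^[j] x) (f^[j] y) ≤ dynDist f n x y := by
  rw [dist_nndist, dynDist, NNReal.coe_le_coe]
  exact Finset.le_sup (f := fun k => nndist (f^[k] x) (f^[k] y)) (Finset.mem_range.2 hj)

lemma my_dynDist_lt_iff {ε : ℝ} (hε : 0 < ε) (x y : X) :
    dynDist f n x y < ε ↔ ∀ k < n, dist (f^[k] x) (f^[k] y) < ε := by
  rw [dynDist, show ε = ((ε.toNNReal : NNReal) : ℝ) from (Real.coe_toNNReal _ hε.le).symm,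
    NNReal.coe_lt_coe,
    Finset.sup_lt_iff (show (⊥ : NNReal) < ε.toNNReal by simp [Real.toNNReal_pos, hε])]
  constructor
  · intro h k hk
    have := h k (Finset.mem_range.2 hk)
    rw [dist_nndist, ← NNReal.coe_lt_coe] at *
    exact_mod_cast this
  · intro h k hk
    have := h k (Finset.mem_range.1 hk)
    rw [dist_nndist] at this
    exact_mod_cast this

lemma my_isOpen_dynBall (hf : Continuous f) (c : X) {ε : ℝ} (hε : 0 < ε) :
    IsOpen {y : X | dynDist f n c y < ε} := by
  have : {y : X | dynDist f n c y < ε}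
      = ⋂ k ∈ Finset.range n, (f^[k]) ⁻¹' Metric.ball (f^[k] c) ε := by
    ext y
    simp only [Set.mem_setOf_eq, Set.mem_iInter, Set.mem_preimage, Metric.mem_ball,
      my_dynDist_lt_iff hε, Finset.mem_range]
    constructor
    · intro h k hk; rw [dist_comm]; exact h k hk
    · intro h k hk; rw [dist_comm]; exact h k hk
  rw [this]
  exact isOpen_biInter_finset fun k _ =>
    (hf.iterate k).isOpen_preimage _ Metric.isOpen_ball

lemma my_bddAbove_sepSet [CompactSpace X] (hf : Continuous f) {ε : ℝ} (hε : 0 < ε) :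
    BddAbove {N | ∃ E : Finset X, E.card = N ∧ IsDynSep f n ε ↑E} := by
  obtain ⟨t, ht⟩ := IsCompact.elim_finite_subcover (isCompact_univ (X := X))
    (fun c : X => {y : X | dynDist f n c y < ε / 2})
    (fun c => my_isOpen_dynBall hf c (by linarith))
    (fun x _ => Set.mem_iUnion.2 ⟨x, by simp [my_dynDist_self, half_pos hε]⟩)
  have hcov : ∀ x : X, ∃ c ∈ t, dynDist f n c x < ε / 2 := by
    intro x
    have := ht (Set.mem_univ x)
    simpa using this
  choose g hg1 hg2 using hcov
  refine ⟨t.card, fun N hN => ?_⟩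
  obtain ⟨E, rfl, hE⟩ := hN
  refine Finset.card_le_card_of_injOn g (fun x _ => hg1 x) ?_
  intro x hx y hy hxy
  by_contra hne
  have h1 : ε ≤ dynDist f n x y := hE x (by simpa using hx) y (by simpa using hy) hne
  have h2 : dynDist f n x y ≤ dynDist f n x (g x) + dynDist f n (g x) y :=
    my_dynDist_triangle x (g x) y
  have h3 : dynDist f n x (g x) < ε / 2 := by rw [my_dynDist_comm]; exact hg2 x
  have h4 : dynDist f n (g x) y < ε / 2 := by rw [hxy]; exact hg2 y
  linarith

lemma my_card_le_sepNum [CompactSpace X] (hf : Continuous f) {ε : ℝ} (hε : 0 < ε)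
    {E : Finset X} (hE : IsDynSep f n ε ↑E) : E.card ≤ sepNum f n ε :=
  le_csSup (my_bddAbove_sepSet hf hε) ⟨E, rfl, hE⟩

lemma my_sepNum_anti [CompactSpace X] (hf : Continuous f) {ε ε' : ℝ} (hε : 0 < ε)
    (h : ε ≤ ε') : sepNum f n ε' ≤ sepNum f n ε := by
  refine csSup_le_csSup (my_bddAbove_sepSet hf hε) ⟨0, ∅, by simp, by simp [IsDynSep]⟩ ?_
  rintro N ⟨E, rfl, hE⟩
  exact ⟨E, rfl, fun x hx y hy hxy => h.trans (hE x hx y hy hxy)⟩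

lemma my_log_nat_mono {a b : ℕ} (h : a ≤ b) : Real.log a ≤ Real.log b := by
  rcases Nat.eq_zero_or_pos a with rfl | ha
  · rcases Nat.eq_zero_or_pos b with rfl | hb
    · simp
    · simpa using Real.log_nonneg (by exact_mod_cast hb)
  · exact Real.log_le_log (by exact_mod_cast ha) (by exact_mod_cast h)

end MyAux

lemma my_div_mono {a b d : ℝ} (h : a ≤ b) (hd : 0 ≤ d) : a / d ≤ b / d := by
  rcases eq_or_lt_of_le hd with h0 | h0
  · simp [← h0]
  · gcongr

/-- if for every m ≥ m₀ the sets O_k, m ≤ k < 2m, are pairwise disjoint,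
each O_k has cardinality k, and every pair of distinct points of their union is
(4mτ, ε₀)-separated for ψ, then S_{4mτ}^ψ(ε₀) ≥ m², the limsup of log S_n^ψ(ε₀)/log n is
at least 2, and h_pol(ψ) ≥ 2. -/
theorem union_of_orbits_separated {X : Type*} [MetricSpace X] [CompactSpace X]
    [DecidableEq X] (ψ : X ≃ₜ X) (τ : ℕ) (hτ : 1 ≤ τ) (ε₀ : ℝ) (hε₀ : 0 < ε₀) (m₀ : ℕ)
    (O : ℕ → Finset X) (hcard : ∀ m ≥ m₀, (O m).card = m)
    (hdisj : ∀ m ≥ m₀, ∀ k l, m ≤ k → k < l → l < 2 * m → Disjoint (O k) (O l))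
    (hsep : ∀ m ≥ m₀, ∀ x ∈ (Finset.Ico m (2 * m)).biUnion O,
      ∀ y ∈ (Finset.Ico m (2 * m)).biUnion O, x ≠ y →
        ∃ j < 4 * m * τ, ε₀ ≤ dist ((⇑ψ)^[j] x) ((⇑ψ)^[j] y)) :
    (∀ m ≥ m₀, m ^ 2 ≤ sepNum (⇑ψ) (4 * m * τ) ε₀) ∧
    (2 : EReal) ≤
      limsup (fun n : ℕ => ((Real.log (sepNum (⇑ψ) n ε₀) / Real.log n : ℝ) : EReal)) atTop ∧
    (2 : EReal) ≤ hpolSep (⇑ψ) := by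
  have part1 : ∀ m ≥ m₀, m ^ 2 ≤ sepNum (⇑ψ) (4 * m * τ) ε₀ := by
    intro m hm
    set E := (Finset.Ico m (2 * m)).biUnion O with hE
    have hsepE : IsDynSep (⇑ψ) (4 * m * τ) ε₀ ↑E := by
      intro x hx y hy hxy
      obtain ⟨j, hj, hjd⟩ := hsep m hm x (Finset.mem_coe.1 hx) y (Finset.mem_coe.1 hy) hxy
      exact hjd.trans (my_dist_le_dynDist hj x y)
    have hcardE : m ^ 2 ≤ E.card := by
      rw [hE, Finset.card_biUnion]
      · calc m ^ 2 = ∑ _k ∈ Finset.Ico m (2 * m), m := by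
              rw [Finset.sum_const, Nat.card_Ico, smul_eq_mul]
              have : 2 * m - m = m := by omega
              rw [this, sq]
          _ ≤ ∑ k ∈ Finset.Ico m (2 * m), (O k).card := by
              refine Finset.sum_le_sum fun k hk => ?_
              rw [Finset.mem_Ico] at hk
              rw [hcard k (le_trans hm hk.1)]
              exact hk.1
      · intro k hk l hl hkl
        rw [Finset.mem_coe, Finset.mem_Ico] at hk hl
        rcases lt_or_gt_of_ne hkl with h | h
        · exact hdisj m hm k l hk.1 h hl.2
        · exact (hdisj m hm l k hl.1 h hk.2).symm
    exact le_trans hcardE (my_card_le_sepNum ψ.continuous hε₀ hsepE)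
  have part2 : (2 : EReal) ≤
      limsup (fun n : ℕ => ((Real.log (sepNum (⇑ψ) n ε₀) / Real.log n : ℝ) : EReal)) atTop := by
    set u : ℕ → EReal :=
      fun n : ℕ => ((Real.log (sepNum (⇑ψ) n ε₀) / Real.log n : ℝ) : EReal) with hu
    set φ : ℕ → ℕ := fun m => 4 * m * τ with hφdef
    have hφ : Tendsto φ atTop atTop := by
      refine tendsto_atTop_mono (fun m => ?_) tendsto_id
      calc (id m : ℕ) = m := rfl
        _ ≤ 4 * m * 1 := by omega
        _ ≤ 4 * m * τ := Nat.mul_le_mul_left _ hτ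
    set v : ℕ → ℝ := fun m => 2 * Real.log m / Real.log ((4 * m * τ : ℕ) : ℝ) with hvdef
    have hτR : (1 : ℝ) ≤ (τ : ℝ) := by exact_mod_cast hτ
    have hv : Tendsto v atTop (𝓝 2) := by
      have hlog : Tendsto (fun m : ℕ => Real.log m) atTop atTop :=
        Real.tendsto_log_atTop.comp tendsto_natCast_atTop_atTop
      have h0 : Tendsto (fun m : ℕ => Real.log (4 * τ : ℝ) / Real.log m) atTop (𝓝 0) :=
        Tendsto.div_atTop tendsto_const_nhds hlog
      have h1 : Tendsto (fun m : ℕ => 2 / (Real.log (4 * τ : ℝ) / Real.log m + 1))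
          atTop (𝓝 2) := by
        have := Tendsto.div (tendsto_const_nhds (x := (2 : ℝ)) (f := atTop))
          (h0.add (tendsto_const_nhds (x := (1 : ℝ)))) (by norm_num)
        simp only [zero_add, div_one] at this
        exact this
      refine h1.congr' ?_
      filter_upwards [eventually_ge_atTop 2] with m hm
      have hm1 : (1 : ℝ) < (m : ℝ) := by exact_mod_cast hm
      have hL : 0 < Real.log m := Real.log_pos hm1
      have hcast : ((4 * m * τ : ℕ) : ℝ) = (4 * τ : ℝ) * m := by push_cast; ring
      rw [hvdef]
      simp only
      rw [hcast, Real.log_mul (show (4*(τ:ℝ)) ≠ 0 by positivity) (show ((m:ℝ)) ≠ 0 by positivity),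
        div_add_one hL.ne', div_div_eq_mul_div]
    have hkey : ∀ᶠ m in atTop, ((v m : ℝ) : EReal) ≤ u (φ m) := by
      filter_upwards [eventually_ge_atTop m₀, eventually_ge_atTop 2] with m hm₀ hm2
      rw [hu]
      simp only
      rw [EReal.coe_le_coe_iff]
      have hnum : 2 * Real.log m ≤ Real.log (sepNum (⇑ψ) (φ m) ε₀) := by
        have h1 : Real.log ((m ^ 2 : ℕ) : ℝ) ≤ Real.log (sepNum (⇑ψ) (φ m) ε₀) :=
          my_log_nat_mono (part1 m hm₀)
        calc 2 * Real.log m = Real.log ((m : ℝ) ^ 2) := by rw [Real.log_pow]; norm_num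
          _ = Real.log ((m ^ 2 : ℕ) : ℝ) := by push_cast; ring_nf
          _ ≤ _ := h1
      have hden : 0 ≤ Real.log ((φ m : ℕ) : ℝ) := by
        simpa using my_log_nat_mono (Nat.zero_le (φ m))
      exact my_div_mono hnum hden
    have hvE : Tendsto (fun m => ((v m : ℝ) : EReal)) atTop (𝓝 (2 : EReal)) := by
      have := EReal.tendsto_coe.2 hv
      rw [show ((2:ℝ):EReal) = 2 from rfl] at this
      exact this
    calc (2 : EReal) = liminf (fun m => ((v m : ℝ) : EReal)) atTop := hvE.liminf_eq.symm
      _ ≤ liminf (fun m => u (φ m)) atTop := liminf_le_liminf hkey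
      _ ≤ limsup (fun m => u (φ m)) atTop := liminf_le_limsup
      _ = limsup u (map φ atTop) := limsup_comp u φ atTop
      _ ≤ limsup u atTop := limsup_le_limsup_of_le hφ
  refine ⟨part1, part2, ?_⟩
  rw [hpolSep]
  refine le_limsup_of_frequently_le (Filter.Eventually.frequently ?_)
  filter_upwards [Ioo_mem_nhdsGT_of_mem (show (0:ℝ) ∈ Set.Ico (0:ℝ) ε₀ from ⟨le_refl _, hε₀⟩)]
    with ε hε
  refine le_trans part2 (limsup_le_limsup ?_)
  filter_upwards with n
  rw [EReal.coe_le_coe_iff]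
  refine my_div_mono ?_ (by simpa using my_log_nat_mono (Nat.zero_le n))
  exact my_log_nat_mono (my_sepNum_anti ψ.continuous hε.1 hε.2.le)
end
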